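/- In System F, a closed normal λ-term t has type N = ∀X.(X → (X → X) → X) if and only if t is a Church numeral n̲ = λx.λf.(f^n x) for some natural number n. -/

import Mathlib

inductive Lam : Type
  | var : ℕ → Lam
  | app : Lam → Lam → Lam
  | lam : Lam → Lam
deriving DecidableEq

namespace Lam

/-- Lift (shift up by one) all de Bruijn indices ≥ d. -/
def lift (d : ℕ) : Lam → Lam
  | var n => if n < d then var n else var (n + 1)
  | app u v => app (lift d u) (lift d v)
  | lam u => lam (lift (d + 1) u)

/-- Capture-avoiding substitution of s for the de Bruijn index d. -/
def subst (d : ℕ) (s : Lam) : Lam → Lam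
  | var n => if n = d then s else if n < d then var n else var (n - 1)
  | app u v => app (subst d s u) (subst d s v)
  | lam u => lam (subst (d + 1) (lift 0 s) u)

/-- One-step β-reduction. -/
inductive Step : Lam → Lam → Prop
  | beta (u v : Lam) : Step (app (lam u) v) (subst 0 v u)
  | appL {u u' : Lam} (v : Lam) : Step u u' → Step (app u v) (app u' v)
  | appR (u : Lam) {v v' : Lam} : Step v v' → Step (app u v) (app u v')
  | lam {u u' : Lam} : Step u u' → Step (lam u) (lam u')

/-- β-equivalence: the reflexive-symmetric-transitive closure of β-reduction. -/
inductive BetaEq : Lam → Lam → Prop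
  | step {u v} : Step u v → BetaEq u v
  | refl (u) : BetaEq u u
  | symm {u v} : BetaEq u v → BetaEq v u
  | trans {u v w} : BetaEq u v → BetaEq v w → BetaEq u w

/-- One step of head reduction: contract the head redex. -/
inductive HeadStep : Lam → Lam → Prop
  | beta (u v : Lam) : HeadStep (app (lam u) v) (subst 0 v u)
  | appL {u u' : Lam} (v : Lam) : HeadStep u u' → (∀ w, u ≠ lam w) →
      HeadStep (app u v) (app u' v)
  | lam {u u' : Lam} : HeadStep u u' → HeadStep (lam u) (lam u')

/-- `Heads u v`: u head-reduces to v in finitely many steps. -/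
def Heads : Lam → Lam → Prop := Relation.ReflTransGen HeadStep

/-- A term is normal if it contains no β-redex. -/
def Normal (t : Lam) : Prop := ∀ u, ¬ Step t u

/-- All free de Bruijn indices of the term are < d. -/
def ClosedUnder : ℕ → Lam → Prop
  | d, var n => n < d
  | d, app u v => ClosedUnder d u ∧ ClosedUnder d v
  | d, lam u => ClosedUnder (d + 1) u

/-- A term is closed if it has no free variables. -/
def Closed (t : Lam) : Prop := ClosedUnder 0 t

/-- The de Bruijn index i occurs free in the term. -/
def FreeIn : ℕ → Lam → Prop
  | i, var n => n = i
  | i, app u v => FreeIn i u ∨ FreeIn i v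
  | i, lam u => FreeIn (i + 1) u

/-- n-fold application: (f^n x). -/
def iterApp : ℕ → Lam → Lam → Lam
  | 0, _, x => x
  | n + 1, f, x => app f (iterApp n f x)

/-- The n-th Church numeral λx.λf.(f^n x). -/
def church (n : ℕ) : Lam := lam (lam (iterApp n (var 0) (var 1)))

/-- T = λx.λy.x -/
def Ttm : Lam := lam (lam (var 1))

/-- F = λx.λy.y -/
def Ftm : Lam := lam (lam (var 0))

end Lam

/-- Types / formulas of System F, with de Bruijn type variables. -/
inductive Ty : Type
  | var : ℕ → Ty
  | bot : Ty
  | arrow : Ty → Ty → Ty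
  | all : Ty → Ty
deriving DecidableEq

namespace Ty

def lift (d : ℕ) : Ty → Ty
  | var n => if n < d then var n else var (n + 1)
  | bot => bot
  | arrow a b => arrow (lift d a) (lift d b)
  | all a => all (lift (d + 1) a)

/-- Capture-avoiding substitution of the type G for the type variable d: A[G/X]. -/
def subst (d : ℕ) (G : Ty) : Ty → Ty
  | var n => if n = d then G else if n < d then var n else var (n - 1)
  | bot => bot
  | arrow a b => arrow (subst d G a) (subst d G b)
  | all a => all (subst (d + 1) (lift 0 G) a)

/-- The type variable i occurs free in the type. -/
def Free : ℕ → Ty → Prop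
  | i, var n => n = i
  | _, bot => False
  | i, arrow a b => Free i a ∨ Free i b
  | i, all a => Free (i + 1) a

/-- ¬A := A → ⊥ -/
def neg (a : Ty) : Ty := arrow a bot

end Ty

/-- Curry-style System F typing: Γ ⊢_F t : A. -/
inductive Typing : List Ty → Lam → Ty → Prop
  | var {Γ : List Ty} {n : ℕ} {A : Ty} : Γ[n]? = some A → Typing Γ (Lam.var n) A
  | lam {Γ A B t} : Typing (A :: Γ) t B → Typing Γ (Lam.lam t) (Ty.arrow A B)
  | app {Γ A B u v} : Typing Γ u (Ty.arrow A B) → Typing Γ v A →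
      Typing Γ (Lam.app u v) B
  | allI {Γ A t} : Typing (Γ.map (Ty.lift 0)) t A → Typing Γ t (Ty.all A)
  | allE {Γ A t} (G : Ty) : Typing Γ t (Ty.all A) → Typing Γ t (Ty.subst 0 G A)

/-- Minimal second-order propositional logic (the logic of System F). -/
inductive Prov : List Ty → Ty → Prop
  | ax {Γ A} : A ∈ Γ → Prov Γ A
  | arrI {Γ A B} : Prov (A :: Γ) B → Prov Γ (Ty.arrow A B)
  | arrE {Γ A B} : Prov Γ (Ty.arrow A B) → Prov Γ A → Prov Γ B
  | allI {Γ A} : Prov (Γ.map (Ty.lift 0)) A → Prov Γ (Ty.all A)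
  | allE {Γ A} (G : Ty) : Prov Γ (Ty.all A) → Prov Γ (Ty.subst 0 G A)

/-- Classical second-order propositional logic F_C: F plus double-negation elimination. -/
inductive ProvC : List Ty → Ty → Prop
  | ax {Γ A} : A ∈ Γ → ProvC Γ A
  | arrI {Γ A B} : ProvC (A :: Γ) B → ProvC Γ (Ty.arrow A B)
  | arrE {Γ A B} : ProvC Γ (Ty.arrow A B) → ProvC Γ A → ProvC Γ B
  | allI {Γ A} : ProvC (Γ.map (Ty.lift 0)) A → ProvC Γ (Ty.all A)
  | allE {Γ A} (G : Ty) : ProvC Γ (Ty.all A) → ProvC Γ (Ty.subst 0 G A)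
  | dne {Γ A} : ProvC Γ (Ty.neg (Ty.neg A)) → ProvC Γ A

/-- The Gödel translation A ↦ A*. -/
def godel : Ty → Ty
  | Ty.var n => Ty.neg (Ty.var n)
  | Ty.bot => Ty.bot
  | Ty.arrow a b => Ty.arrow (godel a) (godel b)
  | Ty.all a => Ty.all (godel a)

/-- The type of booleans B = ∀X.(X → X → X). -/
def BoolTy : Ty := Ty.all (Ty.arrow (Ty.var 0) (Ty.arrow (Ty.var 0) (Ty.var 0)))

/-- The type of Church integers N = ∀X.(X → ((X → X) → X)). -/
def NatTy : Ty :=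
  Ty.all (Ty.arrow (Ty.var 0) (Ty.arrow (Ty.arrow (Ty.var 0) (Ty.var 0)) (Ty.var 0)))

/-- Peirce's law P = ∀X∀Y.(((X → Y) → X) → X). -/
def PeirceTy : Ty :=
  Ty.all (Ty.all (Ty.arrow (Ty.arrow (Ty.arrow (Ty.var 1) (Ty.var 0)) (Ty.var 1)) (Ty.var 1)))

/-- Q = P → ∀X.X. -/
def QTy : Ty := Ty.arrow PeirceTy (Ty.all (Ty.var 0))

/-! ### Auxiliary development -/

namespace Lam

def scons (v : Lam) (σ : ℕ → Lam) : ℕ → Lam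
  | 0 => v
  | n+1 => σ n

def up (σ : ℕ → Lam) : ℕ → Lam := scons (var 0) (fun n => lift 0 (σ n))

def msubst (σ : ℕ → Lam) : Lam → Lam
  | var n => σ n
  | app u v => app (msubst σ u) (msubst σ v)
  | lam u => lam (msubst (up σ) u)

lemma up_congr {σ τ : ℕ → Lam} (h : ∀ n, σ n = τ n) : ∀ n, up σ n = up τ n := by
  intro n; cases n with
  | zero => rfl
  | succ n => simp [up, scons, h n]

lemma msubst_congr {σ τ : ℕ → Lam} (h : ∀ n, σ n = τ n) : ∀ u, msubst σ u = msubst τ u := by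
  intro u
  induction u generalizing σ τ with
  | var n => exact h n
  | app a b iha ihb => simp only [msubst]; rw [iha h, ihb h]
  | lam a ih => simp only [msubst]; rw [ih (up_congr h)]

lemma lift_eq_msubst : ∀ (u : Lam) (d : ℕ),
    lift d u = msubst (fun n => if n < d then var n else var (n+1)) u := by
  intro u
  induction u with
  | var n => intro d; simp [lift, msubst]
  | app a b iha ihb => intro d; simp only [lift, msubst]; rw [iha d, ihb d]
  | lam a ih =>
    intro d
    simp only [lift, msubst]
    rw [ih (d+1)]
    congr 1
    apply msubst_congr
    intro n
    cases n with
    | zero => simp [up, scons]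
    | succ m =>
      by_cases h : m < d
      · have h' : m + 1 < d + 1 := by omega
        simp [up, scons, h, h', lift]
      · have h' : ¬ (m + 1 < d + 1) := by omega
        simp [up, scons, h, h', lift]

lemma subst_eq_msubst : ∀ (u : Lam) (d : ℕ) (v : Lam),
    subst d v u = msubst (fun n => if n = d then v else if n < d then var n else var (n-1)) u := by
  intro u
  induction u with
  | var n => intro d v; simp [subst, msubst]
  | app a b iha ihb => intro d v; simp only [subst, msubst]; rw [iha, ihb]
  | lam a ih =>
    intro d v
    simp only [subst, msubst]
    rw [ih]
    congr 1
    apply msubst_congr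
    intro n
    cases n with
    | zero => simp [up, scons]
    | succ m =>
      simp only [up, scons]
      by_cases h : m = d
      · have h' : m + 1 = d + 1 := by omega
        simp [h, h']
      · by_cases h2 : m < d
        · have h1' : ¬ (m + 1 = d + 1) := by omega
          have h2' : m + 1 < d + 1 := by omega
          simp [h1', h2', h, h2, lift]
        · have h1' : ¬ (m + 1 = d + 1) := by omega
          have h2' : ¬ (m + 1 < d + 1) := by omega
          have hm : 1 ≤ m := by omega
          simp only [h1', h2', h, h2, if_false, lift]
          simp only [Nat.add_sub_cancel]
          congr 1
          omega

lemma lift_lift : ∀ (u : Lam) (i j : ℕ), i ≤ j →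
    lift (j+1) (lift i u) = lift i (lift j u) := by
  intro u
  induction u with
  | var n =>
    intro i j hij
    by_cases h1 : n < i
    · simp [lift, h1, show n < j from by omega, show n < j + 1 from by omega]
    · by_cases h2 : n < j
      · simp [lift, h1, h2, show n + 1 < j + 1 from by omega]
      · simp [lift, h1, h2, show ¬ (n + 1 < j + 1) from by omega,
          show ¬ (n + 1 < i) from by omega]
  | app a b iha ihb => intro i j hij; simp only [lift]; rw [iha _ _ hij, ihb _ _ hij]
  | lam a ih =>
    intro i j hij
    simp only [lift]
    rw [ih (i+1) (j+1) (by omega)]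

def liftn : ℕ → Lam → Lam
  | 0, u => u
  | d+1, u => lift 0 (liftn d u)

def updn : ℕ → (ℕ → Lam) → ℕ → Lam
  | 0, σ => σ
  | d+1, σ => up (updn d σ)

lemma updn_lt {σ : ℕ → Lam} : ∀ d n, n < d → updn d σ n = var n := by
  intro d
  induction d with
  | zero => intro n h; omega
  | succ d ih =>
    intro n h
    cases n with
    | zero => rfl
    | succ m => simp [updn, up, scons, ih m (by omega), lift]

lemma updn_ge {σ : ℕ → Lam} : ∀ d m, updn d σ (d + m) = liftn d (σ m) := by
  intro d
  induction d with
  | zero => intro m; simp [updn, liftn]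
  | succ d ih =>
    intro m
    have h : d + 1 + m = (d + m) + 1 := by omega
    rw [h]
    show up (updn d σ) ((d + m) + 1) = _
    simp [up, scons, ih, liftn]

lemma lift_liftn : ∀ d (u : Lam), lift d (liftn d u) = liftn d (lift 0 u) := by
  intro d
  induction d with
  | zero => intro u; rfl
  | succ d ih =>
    intro u
    show lift (d+1) (lift 0 (liftn d u)) = lift 0 (liftn d (lift 0 u))
    rw [lift_lift _ 0 d (by omega), ih]

lemma msubst_updn_lift (τ : ℕ → Lam) : ∀ (u : Lam) (d : ℕ),
    msubst (updn d (up τ)) (lift d u) = lift d (msubst (updn d τ) u) := by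
  intro u
  induction u with
  | var n =>
    intro d
    by_cases h : n < d
    · simp [lift, msubst, h, updn_lt d n h]
    · obtain ⟨m, rfl⟩ : ∃ m, n = d + m := ⟨n - d, by omega⟩
      simp only [lift, msubst, if_neg h]
      have h1 : d + m + 1 = d + (m + 1) := by omega
      rw [h1, updn_ge, updn_ge, lift_liftn]
      simp [up, scons]
  | app a b iha ihb => intro d; simp only [lift, msubst]; rw [iha, ihb]
  | lam a ih =>
    intro d
    simp only [lift, msubst]
    show lam (msubst (updn (d+1) (up τ)) (lift (d+1) a)) = lam (lift (d+1) (msubst (updn (d+1) τ) a))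
    rw [ih (d+1)]

lemma msubst_up_lift (τ : ℕ → Lam) (u : Lam) :
    msubst (up τ) (lift 0 u) = lift 0 (msubst τ u) :=
  msubst_updn_lift τ u 0

lemma msubst_msubst : ∀ (u : Lam) (σ τ : ℕ → Lam),
    msubst τ (msubst σ u) = msubst (fun n => msubst τ (σ n)) u := by
  intro u
  induction u with
  | var n => intros; rfl
  | app a b iha ihb => intro σ τ; simp only [msubst]; rw [iha, ihb]
  | lam a ih =>
    intro σ τ
    simp only [msubst]
    rw [ih]
    congr 1
    apply msubst_congr
    intro n
    cases n with
    | zero => rfl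
    | succ m =>
      show msubst (up τ) (lift 0 (σ m)) = lift 0 (msubst τ (σ m))
      exact msubst_up_lift τ (σ m)

lemma subst_lift_self : ∀ (u : Lam) (d : ℕ) (v : Lam), subst d v (lift d u) = u := by
  intro u
  induction u with
  | var n =>
    intro d v
    by_cases h : n < d
    · simp [lift, subst, h, Nat.ne_of_lt h]
    · have h1 : ¬ (n + 1 = d) := by omega
      have h2 : ¬ (n + 1 < d) := by omega
      simp [lift, subst, h, h1, h2]
  | app a b iha ihb => intro d v; simp only [lift, subst]; rw [iha, ihb]
  | lam a ih => intro d v; simp only [lift, subst]; rw [ih]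

lemma subst_msubst_up (u v : Lam) (σ : ℕ → Lam) :
    subst 0 v (msubst (up σ) u) = msubst (scons v σ) u := by
  rw [subst_eq_msubst, msubst_msubst]
  apply msubst_congr
  intro n
  cases n with
  | zero => rfl
  | succ m =>
    simp only [up, scons]
    rw [← subst_eq_msubst, subst_lift_self]

lemma msubst_closedUnder : ∀ (t : Lam) (d : ℕ) (σ : ℕ → Lam),
    ClosedUnder d t → (∀ n, n < d → σ n = var n) → msubst σ t = t := by
  intro t
  induction t with
  | var n => intro d σ hc hσ; exact hσ n hc
  | app a b iha ihb =>
    intro d σ hc hσ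
    simp only [msubst]
    rw [iha d σ hc.1 hσ, ihb d σ hc.2 hσ]
  | lam a ih =>
    intro d σ hc hσ
    simp only [msubst]
    rw [ih (d+1) (up σ) hc]
    intro n hn
    cases n with
    | zero => rfl
    | succ m => simp [up, scons, hσ m (by omega), lift]

lemma normal_of_lam {u : Lam} (h : Normal (lam u)) : Normal u :=
  fun s hs => h (lam s) (Step.lam hs)

lemma normal_appL {a b : Lam} (h : Normal (app a b)) : Normal a :=
  fun s hs => h (app s b) (Step.appL b hs)

lemma neutral_aux : ∀ t : Lam, Normal t → ClosedUnder 0 t → (∀ w, t ≠ lam w) → False := by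
  intro t
  induction t with
  | var n => intro _ hc _; exact absurd hc (by simp [ClosedUnder])
  | app a b iha ihb =>
    intro hn hc _
    apply iha (normal_appL hn) hc.1
    intro w hw
    subst hw
    exact hn _ (Step.beta w b)
  | lam a _ => intro _ _ hne; exact hne a rfl

lemma closed_normal_is_lam {t : Lam} (hn : Normal t) (hc : Closed t) : ∃ u, t = lam u := by
  cases t with
  | var n => exact absurd hc (by simp [Closed, ClosedUnder])
  | app a b => exact absurd (neutral_aux _ hn hc (fun w h => by simp at h)) (by simp)
  | lam u => exact ⟨u, rfl⟩

lemma step_subst_var : ∀ (u : Lam) (d j : ℕ) (s : Lam),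
    Step (subst d (var j) u) s → ∃ u', Step u u' := by
  intro u
  induction u with
  | var n =>
    intro d j s h
    simp only [subst] at h
    split_ifs at h <;> cases h
  | app a b iha ihb =>
    intro d j s h
    simp only [subst] at h
    generalize hA : subst d (var j) a = A at h
    cases h with
    | beta u v =>
      cases a with
      | var m => simp only [subst] at hA; split_ifs at hA <;> simp at hA
      | app a1 a2 => simp [subst] at hA
      | lam a1 => exact ⟨_, Step.beta a1 b⟩
    | appL v hs =>
      rw [← hA] at hs
      obtain ⟨a', ha'⟩ := iha _ _ _ hs
      exact ⟨app a' b, Step.appL b ha'⟩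
    | appR u hs =>
      obtain ⟨b', hb'⟩ := ihb _ _ _ hs
      exact ⟨app a b', Step.appR a hb'⟩
  | lam a ih =>
    intro d j s h
    simp only [subst] at h
    have hl : Lam.lift 0 (var j) = var (j+1) := by simp [lift]
    rw [hl] at h
    cases h with
    | lam hs =>
      obtain ⟨a', ha'⟩ := ih _ _ _ hs
      exact ⟨lam a', Step.lam ha'⟩

lemma subst_subst_var_closed : ∀ (w : Lam) (d : ℕ), ClosedUnder (d+2) w →
    subst d (var d) (subst (d+1) (var (d+2)) w) = w := by
  intro w
  induction w with
  | var n =>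
    intro d hc
    have hn : n < d + 2 := hc
    simp only [subst]
    split_ifs <;> simp only [subst] <;> split_ifs <;>
      first | rfl | (congr 1; omega) | (exfalso; omega)
  | app a b iha ihb =>
    intro d hc
    simp only [subst]
    rw [iha d hc.1, ihb d hc.2]
  | lam a ih =>
    intro d hc
    have h1 : Lam.lift 0 (var d) = var (d+1) := by simp [lift]
    have h2 : Lam.lift 0 (var (d+2)) = var (d+3) := by simp [lift]
    simp only [subst]
    rw [h1, h2]
    have := ih (d+1) hc
    rw [show d+1+2 = d+3 from by omega] at this
    rw [this]

def apps : Lam → List Lam → Lam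
  | t, [] => t
  | t, a :: π => apps (app t a) π

lemma apps_append : ∀ (π : List Lam) (t w : Lam), apps t (π ++ [w]) = app (apps t π) w := by
  intro π
  induction π with
  | nil => intros; rfl
  | cons a π ih =>
    intro t w
    show apps (app t a) (π ++ [w]) = app (apps (app t a) π) w
    exact ih _ w

lemma step_apps {a b : Lam} (h : Step a b) : ∀ π, Step (apps a π) (apps b π) := by
  intro π
  induction π generalizing a b with
  | nil => exact h
  | cons w π ih => exact ih (Step.appL w h)

lemma reds_appR (a : Lam) {b b' : Lam} (h : Relation.ReflTransGen Step b b') :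
    Relation.ReflTransGen Step (app a b) (app a b') :=
  h.lift (fun x => app a x) (fun _ _ hs => Step.appR a hs)

lemma normal_reds_eq {z y : Lam} (hz : Normal z) (h : Relation.ReflTransGen Step z y) : z = y := by
  rcases Relation.ReflTransGen.cases_head h with h1 | ⟨c, hc, _⟩
  · exact h1
  · exact absurd hc (hz c)

end Lam

/-! ### Semantics -/

def econs (S : Set Lam) (ρ : ℕ → Set Lam) : ℕ → Set Lam
  | 0 => S
  | n+1 => ρ n

def eins (d : ℕ) (S : Set Lam) (ρ : ℕ → Set Lam) : ℕ → Set Lam :=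
  fun n => if n < d then ρ n else if n = d then S else ρ (n-1)

def Sat (S : Set Lam) : Prop :=
  ∀ u v π, Lam.apps (Lam.subst 0 v u) π ∈ S → Lam.apps (Lam.app (Lam.lam u) v) π ∈ S

def Interp (ρ : ℕ → Set Lam) : Ty → Set Lam
  | Ty.var n => ρ n
  | Ty.bot => ∅
  | Ty.arrow A B => {t | ∀ v ∈ Interp ρ A, Lam.app t v ∈ Interp ρ B}
  | Ty.all A => {t | ∀ S : Set Lam, Sat S → t ∈ Interp (econs S ρ) A}

lemma eins_zero (S : Set Lam) (ρ : ℕ → Set Lam) : eins 0 S ρ = econs S ρ := by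
  funext n
  cases n with
  | zero => simp [eins, econs]
  | succ m => simp [eins, econs]

lemma eins_succ (d : ℕ) (S T : Set Lam) (ρ : ℕ → Set Lam) :
    eins (d+1) S (econs T ρ) = econs T (eins d S ρ) := by
  funext n
  cases n with
  | zero => simp [eins, econs]
  | succ m =>
    show eins (d+1) S (econs T ρ) (m+1) = eins d S ρ m
    by_cases h1 : m < d
    · have h1' : m + 1 < d + 1 := by omega
      simp [eins, h1, h1', econs]
    · by_cases h2 : m = d
      · have h2' : m + 1 = d + 1 := by omega
        simp [eins, h1, h2, h2']
      · have h1' : ¬ (m + 1 < d + 1) := by omega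
        have h2' : ¬ (m + 1 = d + 1) := by omega
        simp only [eins, h1, h2, h1', h2', if_false, Nat.add_sub_cancel]
        cases m with
        | zero => omega
        | succ k => simp [econs]

lemma interp_lift : ∀ (A : Ty) (d : ℕ) (S : Set Lam) (ρ : ℕ → Set Lam),
    Interp (eins d S ρ) (Ty.lift d A) = Interp ρ A := by
  intro A
  induction A with
  | var n =>
    intro d S ρ
    by_cases h : n < d
    · simp [Ty.lift, h, Interp, eins]
    · have h1 : ¬ (n + 1 < d) := by omega
      have h2 : ¬ (n + 1 = d) := by omega
      simp [Ty.lift, h, Interp, eins, h1, h2]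
  | bot => intros; rfl
  | arrow A B ihA ihB =>
    intro d S ρ
    simp only [Ty.lift, Interp]
    rw [ihA, ihB]
  | all A ih =>
    intro d S ρ
    simp only [Ty.lift, Interp]
    ext t
    simp only [Set.mem_setOf_eq]
    constructor
    · intro h T hT
      have := h T hT
      rwa [← eins_succ, ih] at this
    · intro h T hT
      rw [← eins_succ, ih]
      exact h T hT

lemma interp_subst : ∀ (A G : Ty) (d : ℕ) (ρ : ℕ → Set Lam),
    Interp ρ (Ty.subst d G A) = Interp (eins d (Interp ρ G) ρ) A := by
  intro A
  induction A with
  | var n =>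
    intro G d ρ
    by_cases h1 : n = d
    · simp [Ty.subst, h1, Interp, eins]
    · by_cases h2 : n < d
      · simp [Ty.subst, h1, h2, Interp, eins]
      · simp [Ty.subst, h1, h2, Interp, eins]
  | bot => intros; rfl
  | arrow A B ihA ihB =>
    intro G d ρ
    simp only [Ty.subst, Interp]
    rw [ihA, ihB]
  | all A ih =>
    intro G d ρ
    simp only [Ty.subst, Interp]
    ext t
    simp only [Set.mem_setOf_eq]
    have hG : ∀ T : Set Lam, Interp (econs T ρ) (Ty.lift 0 G) = Interp ρ G := by
      intro T; rw [← eins_zero, interp_lift]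
    constructor
    · intro h T hT
      have := h T hT
      rwa [ih, hG, eins_succ] at this
    · intro h T hT
      have := h T hT
      rw [ih, hG, eins_succ]
      exact this

lemma sat_interp : ∀ (A : Ty) {ρ : ℕ → Set Lam}, (∀ n, Sat (ρ n)) → Sat (Interp ρ A) := by
  intro A
  induction A with
  | var n => intro ρ h; exact h n
  | bot => intro ρ h u v π hm; exact absurd hm (Set.notMem_empty _)
  | arrow A B ihA ihB =>
    intro ρ h u v π hm
    simp only [Interp, Set.mem_setOf_eq] at hm ⊢
    intro w hw
    have h1 : Lam.apps (Lam.subst 0 v u) (π ++ [w]) ∈ Interp ρ B := by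
      rw [Lam.apps_append]
      exact hm w hw
    have h2 := ihB h u v (π ++ [w]) h1
    rwa [Lam.apps_append] at h2
  | all A ih =>
    intro ρ h u v π hm S hS
    have hm' : Lam.apps (Lam.subst 0 v u) π ∈ Interp (econs S ρ) A := hm S hS
    exact ih (ρ := econs S ρ)
      (fun n => by cases n with | zero => exact hS | succ k => exact h k) u v π hm'

theorem adequacy : ∀ {Γ : List Ty} {t : Lam} {A : Ty}, Typing Γ t A →
    ∀ (ρ : ℕ → Set Lam) (σ : ℕ → Lam), (∀ n, Sat (ρ n)) →
    (∀ n B, Γ[n]? = some B → σ n ∈ Interp ρ B) →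
    Lam.msubst σ t ∈ Interp ρ A := by
  intro Γ t A h
  induction h with
  | @var Γ n A hnth =>
    intro ρ σ hρ hσ
    exact hσ n A hnth
  | @lam Γ A B t0 hB ih =>
    intro ρ σ hρ hσ
    show Lam.lam (Lam.msubst (Lam.up σ) t0) ∈ Interp ρ (Ty.arrow A B)
    simp only [Interp, Set.mem_setOf_eq]
    intro v hv
    have hb : Lam.msubst (Lam.scons v σ) t0 ∈ Interp ρ B := by
      apply ih ρ (Lam.scons v σ) hρ
      intro n B' hn
      cases n with
      | zero =>
        simp only [List.getElem?_cons_zero, Option.some_inj] at hn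
        subst hn
        exact hv
      | succ k =>
        simp only [List.getElem?_cons_succ] at hn
        exact hσ k B' hn
    have hsat := sat_interp B hρ
    have := hsat (Lam.msubst (Lam.up σ) t0) v []
      (by show Lam.subst 0 v (Lam.msubst (Lam.up σ) t0) ∈ Interp ρ B
          rwa [Lam.subst_msubst_up])
    exact this
  | @app Γ A B u v h1 h2 ih1 ih2 =>
    intro ρ σ hρ hσ
    have H1 := ih1 ρ σ hρ hσ
    have H2 := ih2 ρ σ hρ hσ
    simp only [Interp, Set.mem_setOf_eq] at H1
    exact H1 _ H2
  | @allI Γ A t0 h ih =>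
    intro ρ σ hρ hσ
    simp only [Interp, Set.mem_setOf_eq]
    intro S hS
    apply ih (econs S ρ) σ (fun n => by cases n with | zero => exact hS | succ k => exact hρ k)
    intro n B hn
    rw [List.getElem?_map] at hn
    cases hΓ : Γ[n]? with
    | none => rw [hΓ] at hn; simp at hn
    | some B0 =>
      rw [hΓ] at hn
      simp only [Option.map_some, Option.some_inj] at hn
      subst hn
      rw [← eins_zero S ρ, interp_lift]
      exact hσ n B0 hΓ
  | @allE Γ A t0 G h ih =>
    intro ρ σ hρ hσ
    rw [interp_subst, eins_zero]
    have := ih ρ σ hρ hσ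
    simp only [Interp, Set.mem_setOf_eq] at this
    exact this (Interp ρ G) (sat_interp G hρ)

/-! ### The easy direction -/

lemma iter_typed (n : ℕ) : Typing [Ty.arrow (Ty.var 0) (Ty.var 0), Ty.var 0]
    (Lam.iterApp n (Lam.var 0) (Lam.var 1)) (Ty.var 0) := by
  induction n with
  | zero => exact Typing.var (by simp)
  | succ n ih => exact Typing.app (Typing.var (by simp)) ih

lemma church_typed (n : ℕ) : Typing [] (Lam.church n) NatTy := by
  apply Typing.allI
  show Typing [] (Lam.church n)
    (Ty.arrow (Ty.var 0) (Ty.arrow (Ty.arrow (Ty.var 0) (Ty.var 0)) (Ty.var 0)))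
  exact Typing.lam (Typing.lam (iter_typed n))


/-- A closed normal term has type N = ∀X.(X → (X → X) → X) iff it is a
Church numeral. -/
theorem systemF_nat_characterization {t : Lam}
    (hnorm : Lam.Normal t) (hcl : Lam.Closed t) :
    Typing [] t NatTy ↔ ∃ n : ℕ, t = Lam.church n := by
  constructor
  · intro h
    obtain ⟨u, rfl⟩ := Lam.closed_normal_is_lam hnorm hcl
    set S : Set Lam :=
      {w | ∃ n, Relation.ReflTransGen Lam.Step w (Lam.iterApp n (Lam.var 0) (Lam.var 1))} with hSdef
    have hS : Sat S := by
      rintro u' v π ⟨n, hn⟩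
      exact ⟨n, Relation.ReflTransGen.head (Lam.step_apps (Lam.Step.beta u' v) π) hn⟩
    set ρ0 : ℕ → Set Lam := fun _ => (∅ : Set Lam) with hρ0def
    have hρ0 : ∀ n, Sat (ρ0 n) := fun n u v π hm => absurd hm (Set.notMem_empty _)
    have hms : Lam.msubst Lam.var (Lam.lam u) = Lam.lam u :=
      Lam.msubst_closedUnder _ 0 _ hcl (fun n hn => absurd hn (by omega))
    have had := adequacy h ρ0 Lam.var hρ0 (fun n B hn => by simp at hn)
    rw [hms] at had
    have h1 : Lam.lam u ∈ Interp (econs S ρ0)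
        (Ty.arrow (Ty.var 0) (Ty.arrow (Ty.arrow (Ty.var 0) (Ty.var 0)) (Ty.var 0))) := by
      simp only [NatTy, Interp, Set.mem_setOf_eq] at had
      exact had S hS
    simp only [Interp, Set.mem_setOf_eq] at h1
    have hx : Lam.var 1 ∈ Interp (econs S ρ0) (Ty.var 0) :=
      ⟨0, Relation.ReflTransGen.refl⟩
    have hf : Lam.var 0 ∈ Interp (econs S ρ0) (Ty.arrow (Ty.var 0) (Ty.var 0)) := by
      simp only [Interp, Set.mem_setOf_eq]
      rintro w ⟨n, hn⟩
      exact ⟨n + 1, Lam.reds_appR (Lam.var 0) hn⟩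
    have hT0 := h1 (Lam.var 1) hx
    obtain ⟨n, hred⟩ := hT0 (Lam.var 0) hf
    refine ⟨n, ?_⟩
    have hu : Lam.Normal u := Lam.normal_of_lam hnorm
    have hcu : Lam.ClosedUnder 1 u := hcl
    rcases Relation.ReflTransGen.cases_head hred with heq | ⟨c, hstep, hrest⟩
    · exfalso
      cases n with
      | zero => simp [Lam.iterApp] at heq
      | succ m => simp [Lam.iterApp] at heq
    · have hc1 : c = Lam.app (Lam.subst 0 (Lam.var 1) u) (Lam.var 0) := by
        cases hstep with
        | appL v hs =>
          cases hs with
          | beta => rfl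
          | appL v' hs' =>
            cases hs' with
            | lam hs'' => exact absurd hs'' (hu _)
          | appR _ hs' => cases hs'
        | appR _ hs => cases hs
      subst hc1
      cases u with
      | var m =>
        exfalso
        have hm : m = 0 := by
          have : m < 1 := hcu
          omega
        subst hm
        have hsub : Lam.subst 0 (Lam.var 1) (Lam.var 0) = Lam.var 1 := by simp [Lam.subst]
        rw [hsub] at hrest
        have hnc : Lam.Normal (Lam.app (Lam.var 1) (Lam.var 0)) := by
          intro s hs
          cases hs with
          | appL _ hs' => cases hs'
          | appR _ hs' => cases hs'
        have heq2 := Lam.normal_reds_eq hnc hrest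
        cases n with
        | zero => simp [Lam.iterApp] at heq2
        | succ m => simp [Lam.iterApp] at heq2
      | app a b =>
        exfalso
        have hnc : Lam.Normal (Lam.app (Lam.subst 0 (Lam.var 1) (Lam.app a b)) (Lam.var 0)) := by
          intro s hs
          simp only [Lam.subst] at hs
          cases hs with
          | appL _ hs' =>
            obtain ⟨w, hw⟩ := Lam.step_subst_var (Lam.app a b) 0 1 _ hs'
            exact hu _ hw
          | appR _ hs' => cases hs'
        have heq2 := Lam.normal_reds_eq hnc hrest
        cases n with
        | zero => simp [Lam.iterApp, Lam.subst] at heq2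
        | succ m => simp [Lam.iterApp, Lam.subst] at heq2
      | lam w =>
        have hw_cl : Lam.ClosedUnder 2 w := hcu
        have hww : Lam.Normal w := Lam.normal_of_lam (Lam.normal_of_lam hnorm)
        have hsub : Lam.subst 0 (Lam.var 1) (Lam.lam w) = Lam.lam (Lam.subst 1 (Lam.var 2) w) := by
          simp [Lam.subst, Lam.lift]
        rw [hsub] at hrest
        rcases Relation.ReflTransGen.cases_head hrest with heq2 | ⟨c2, hstep2, hrest2⟩
        · exfalso
          cases n with
          | zero => simp [Lam.iterApp] at heq2
          | succ m => simp [Lam.iterApp] at heq2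
        · have hc2 : c2 = w := by
            cases hstep2 with
            | beta => exact Lam.subst_subst_var_closed w 0 hw_cl
            | appL _ hs' =>
              exfalso
              cases hs' with
              | lam hs'' =>
                obtain ⟨w', hw'⟩ := Lam.step_subst_var w 1 2 _ hs''
                exact hww _ hw'
            | appR _ hs' => cases hs'
          subst hc2
          have hfin := Lam.normal_reds_eq hww hrest2
          rw [Lam.church, hfin]
  · rintro ⟨n, rfl⟩
    exact church_typed n
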